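/- arXiv:2211.03766 — 4 statements merged into one kernel-verified Lean document; each statement's English description precedes it below -/
import Mathlib

section
/- For all integers n ≥ k ≥ 0, the alternating sum ∑_{j=0}^{k} C(k,j) · (-1)^{k-j} / (n+1-j) equals 1 / (C(n,k) · (n+1)). -/
theorem alternating_sum_binomial (n k : ℕ) (h : k ≤ n) :
    ∑ j ∈ Finset.range (k + 1),
      (k.choose j : ℝ) * (-1) ^ (k - j) / ((n : ℝ) + 1 - (j : ℝ)) =
    1 / ((n.choose k : ℝ) * ((n : ℝ) + 1)) := by
  induction k generalizing n with
  | zero => simp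
  | succ k IH =>
    obtain ⟨m, rfl⟩ : ∃ m, n = m + 1 := ⟨n - 1, by omega⟩
    have hk : k ≤ m := by omega
    have IH1 := IH m hk
    have IH2 := IH (m + 1) (by omega)
    -- rewrite the sum S(m+1,k) by peeling the first term
    have hSm1 : ∑ j ∈ Finset.range (k + 1),
        (k.choose j : ℝ) * (-1) ^ (k - j) / (((m+1 : ℕ) : ℝ) + 1 - (j : ℝ)) =
        (∑ i ∈ Finset.range (k + 1),
          (k.choose (i+1) : ℝ) * (-1) ^ (k - (i+1)) / ((m : ℝ) + 1 - (i : ℝ)))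
        + (-1) ^ k / ((m : ℝ) + 2) := by
      rw [Finset.sum_range_succ']
      rw [Finset.sum_range_succ]
      simp only [Nat.choose_succ_self, Nat.cast_zero, zero_mul, zero_div, add_zero,
        Nat.choose_zero_right, Nat.cast_one, one_mul, Nat.sub_zero]
      push_cast
      congr 1
      · exact Finset.sum_congr rfl fun x _ => by
          have : (m:ℝ) + 1 + 1 - ((x:ℝ) + 1) = (m:ℝ) + 1 - (x:ℝ) := by ring
          rw [this]
      · ring_nf
    have key : ∑ j ∈ Finset.range (k + 1 + 1),
        ((k+1).choose j : ℝ) * (-1) ^ (k + 1 - j) / (((m+1 : ℕ) : ℝ) + 1 - (j : ℝ)) =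
        (∑ j ∈ Finset.range (k + 1),
          (k.choose j : ℝ) * (-1) ^ (k - j) / ((m : ℝ) + 1 - (j : ℝ)))
        - (∑ j ∈ Finset.range (k + 1),
          (k.choose j : ℝ) * (-1) ^ (k - j) / (((m+1 : ℕ) : ℝ) + 1 - (j : ℝ))) := by
      rw [hSm1, Finset.sum_range_succ']
      have termwise : ∀ i ∈ Finset.range (k + 1),
          ((k+1).choose (i+1) : ℝ) * (-1) ^ (k + 1 - (i+1)) / (((m+1 : ℕ) : ℝ) + 1 - ((i+1 : ℕ) : ℝ))
          + (k.choose (i+1) : ℝ) * (-1) ^ (k - (i+1)) / ((m : ℝ) + 1 - (i : ℝ))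
          = (k.choose i : ℝ) * (-1) ^ (k - i) / ((m : ℝ) + 1 - (i : ℝ)) := by
        intro i hi
        rw [Finset.mem_range] at hi
        have hcast : ((m+1 : ℕ) : ℝ) + 1 - ((i+1 : ℕ) : ℝ) = (m : ℝ) + 1 - (i : ℝ) := by
          push_cast; ring
        have hexp : k + 1 - (i + 1) = k - i := by omega
        rw [hcast, hexp, Nat.choose_succ_succ]
        push_cast
        rcases eq_or_lt_of_le (Nat.lt_succ_iff.mp hi) with hik | hik
        · subst hik
          simp [Nat.choose_succ_self]
        · have h2 : k - i = (k - (i+1)) + 1 := by omega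
          rw [h2]
          ring
      have hsum := Finset.sum_congr rfl termwise
      rw [Finset.sum_add_distrib] at hsum
      have hf0 : ((k+1).choose 0 : ℝ) * (-1) ^ (k + 1 - 0) / (((m+1 : ℕ) : ℝ) + 1 - ((0 : ℕ) : ℝ))
          = -((-1 : ℝ) ^ k / ((m : ℝ) + 2)) := by
        simp only [Nat.choose_zero_right, Nat.cast_one, Nat.cast_zero, one_mul, sub_zero]
        push_cast
        rw [pow_succ]
        ring
      rw [hf0]
      linarith [hsum]
    rw [key, IH1, IH2]
    -- now pure algebra with binomial identities
    have ha : (0 : ℝ) < (m.choose k : ℝ) := by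
      exact_mod_cast Nat.choose_pos hk
    have hb : (0 : ℝ) < ((m+1).choose k : ℝ) := by
      exact_mod_cast Nat.choose_pos (by omega : k ≤ m + 1)
    have hc : (0 : ℝ) < ((m+1).choose (k+1) : ℝ) := by
      exact_mod_cast Nat.choose_pos (by omega : k + 1 ≤ m + 1)
    have key1 : ((m : ℝ) + 1) * (m.choose k : ℝ) = ((m+1).choose (k+1) : ℝ) * ((k : ℝ) + 1) := by
      exact_mod_cast Nat.add_one_mul_choose_eq m k
    have key2 : (m.choose k : ℝ) * ((m : ℝ) + 1) = ((m+1).choose k : ℝ) * ((m : ℝ) + 1 - (k : ℝ)) := by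
      have h0 := Nat.choose_mul_succ_eq m k
      have h3 : ((m + 1 - k : ℕ) : ℝ) = (m : ℝ) + 1 - (k : ℝ) := by
        push_cast [Nat.cast_sub (by omega : k ≤ m + 1)]; ring
      rw [← h3]
      exact_mod_cast h0
    have hmk : (0 : ℝ) < (m : ℝ) + 1 - (k : ℝ) := by
      have : (k : ℝ) ≤ (m : ℝ) := by exact_mod_cast hk
      linarith
    push_cast
    field_simp
    linear_combination (-(((m+1).choose (k+1) : ℝ))) * key2 -
      ((((m+1).choose k : ℝ))) * key1
end

section
/- Let Λ be a full-rank lattice in an n-dimensional Euclidean vector space V, and let λ_ℤ(Λ) be the smallest λ such that Λ has a ℤ-basis all of whose vectors have norm ≤ λ. Let r > 0 and μ > 0 be real numbers with rμ ≥ n λ_ℤ(Λ), and let K ⊆ V be compact, convex, and symmetric with closed ball B̄_r(0) ⊆ K. Then #(K ∩ Λ) / #(μK ∩ Λ) ≤ μ^{−n} (1 + n(1 + μ^{−1}) r^{−1} λ_ℤ(Λ))^n. (This may be proved assuming the lattice-point bounds #(K∩Λ) ≤ (Vol K/det Λ)(1 + n λ_n(K,Λ)/2)^n and #(int(K)∩Λ)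 ≥ (Vol K/det Λ)(1 − n λ_n(K,Λ)/2)^n whenever λ_n(K,Λ) ≤ 2/n.) -/
open MeasureTheory Pointwise

/-- The `j`-th successive minimum of a convex body `K` with respect to a lattice `Λ`
(given as a set) in Euclidean `n`-space. -/
noncomputable def succMinimum (n j : ℕ) (K Λ : Set (EuclideanSpace ℝ (Fin n))) : ℝ :=
  sInf {l : ℝ | 0 < l ∧
    j ≤ Module.finrank ℝ
      (Submodule.span ℝ ((l • K) ∩ Λ) : Submodule ℝ (EuclideanSpace ℝ (Fin n)))}

/-- `λ_ℤ(Λ)`: the smallest `l` such that the lattice `Λ` admits a `ℤ`-basis all of whose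
vectors have norm at most `l`. -/
noncomputable def lambdaZ (n : ℕ) (Λ : Set (EuclideanSpace ℝ (Fin n))) : ℝ :=
  sInf {l : ℝ | 0 < l ∧ ∃ v : Fin n → EuclideanSpace ℝ (Fin n),
    (∀ i, v i ∈ Λ ∧ ‖v i‖ ≤ l) ∧
    ((Submodule.span ℤ (Set.range v) : Submodule ℤ (EuclideanSpace ℝ (Fin n))) :
      Set (EuclideanSpace ℝ (Fin n))) = Λ}

lemma lambdaZ_set_nonempty {n : ℕ} (b : Module.Basis (Fin n) ℝ (EuclideanSpace ℝ (Fin n)))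
    (Λ : Set (EuclideanSpace ℝ (Fin n)))
    (hΛ : Λ = ((Submodule.span ℤ (Set.range ⇑b) :
      Submodule ℤ (EuclideanSpace ℝ (Fin n))) : Set (EuclideanSpace ℝ (Fin n)))) :
    {l : ℝ | 0 < l ∧ ∃ v : Fin n → EuclideanSpace ℝ (Fin n),
      (∀ i, v i ∈ Λ ∧ ‖v i‖ ≤ l) ∧
      ((Submodule.span ℤ (Set.range v) : Submodule ℤ (EuclideanSpace ℝ (Fin n))) :
        Set (EuclideanSpace ℝ (Fin n))) = Λ}.Nonempty := by
  refine ⟨1 + ∑ i, ‖b i‖, ⟨by positivity, b, fun i => ⟨?_, ?_⟩, hΛ.symm⟩⟩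
  · rw [hΛ]; exact Submodule.subset_span ⟨i, rfl⟩
  · have h1 : ‖b i‖ ≤ ∑ j, ‖b j‖ :=
      Finset.single_le_sum (fun j _ => norm_nonneg _) (Finset.mem_univ i)
    linarith

lemma lambdaZ_nonneg {n : ℕ} (Λ : Set (EuclideanSpace ℝ (Fin n))) : 0 ≤ lambdaZ n Λ :=
  Real.sInf_nonneg (fun _ hx => hx.1.le)

lemma succMinimum_nonneg {n j : ℕ} (K Λ : Set (EuclideanSpace ℝ (Fin n))) :
    0 ≤ succMinimum n j K Λ :=
  Real.sInf_nonneg (fun _ hx => hx.1.le)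

lemma succMinimum_le_lambdaZ_div {n : ℕ} (b : Module.Basis (Fin n) ℝ (EuclideanSpace ℝ (Fin n)))
    (Λ : Set (EuclideanSpace ℝ (Fin n)))
    (hΛ : Λ = ((Submodule.span ℤ (Set.range ⇑b) :
      Submodule ℤ (EuclideanSpace ℝ (Fin n))) : Set (EuclideanSpace ℝ (Fin n))))
    (K' : Set (EuclideanSpace ℝ (Fin n))) (ρ : ℝ) (hρ : 0 < ρ)
    (hball : Metric.closedBall (0 : EuclideanSpace ℝ (Fin n)) ρ ⊆ K') :
    succMinimum n n K' Λ ≤ lambdaZ n Λ / ρ := by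
  rw [le_div_iff₀ hρ]
  apply le_csInf (lambdaZ_set_nonempty b Λ hΛ)
  rintro l ⟨hl, v, hv, hspan⟩
  rw [← le_div_iff₀ hρ]
  apply csInf_le ⟨0, fun x hx => hx.1.le⟩
  refine ⟨div_pos hl hρ, ?_⟩
  have hsub : Set.range v ⊆ ((l / ρ) • K') ∩ Λ := by
    rintro _ ⟨i, rfl⟩
    refine ⟨?_, (hv i).1⟩
    have hvi : v i = (l / ρ) • ((ρ / l) • v i) := by
      rw [smul_smul, show l / ρ * (ρ / l) = 1 by field_simp, one_smul]
    rw [hvi]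
    refine Set.smul_mem_smul_set (hball ?_)
    rw [Metric.mem_closedBall, dist_zero_right, norm_smul, Real.norm_eq_abs,
      abs_of_pos (div_pos hρ hl)]
    calc ρ / l * ‖v i‖ ≤ ρ / l * l :=
          mul_le_mul_of_nonneg_left (hv i).2 (div_pos hρ hl).le
      _ = ρ := by field_simp
  have htop : Submodule.span ℝ (((l / ρ) • K') ∩ Λ) = ⊤ := by
    rw [eq_top_iff, ← b.span_eq]
    apply Submodule.span_le.mpr
    rintro _ ⟨i, rfl⟩
    have hbΛ : b i ∈ Λ := by rw [hΛ]; exact Submodule.subset_span ⟨i, rfl⟩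
    rw [← hspan] at hbΛ
    have hle : (Submodule.span ℤ (Set.range v) : Submodule ℤ (EuclideanSpace ℝ (Fin n))) ≤
        (Submodule.span ℝ (((l / ρ) • K') ∩ Λ)).restrictScalars ℤ :=
      Submodule.span_le.mpr (fun x hx => Submodule.subset_span (hsub hx))
    exact hle hbΛ
  rw [htop]
  simp [finrank_top]

set_option maxHeartbeats 1000000 in
theorem card_quotient_bound (n : ℕ) (hn : 0 < n)
    (b : Module.Basis (Fin n) ℝ (EuclideanSpace ℝ (Fin n)))
    (Λ : Set (EuclideanSpace ℝ (Fin n)))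
    (hΛ : Λ = ((Submodule.span ℤ (Set.range ⇑b) :
      Submodule ℤ (EuclideanSpace ℝ (Fin n))) : Set (EuclideanSpace ℝ (Fin n))))
    (FL_upper : ∀ K' : Set (EuclideanSpace ℝ (Fin n)), IsCompact K' → Convex ℝ K' →
      K' = -K' → 0 < volume K' →
      (Nat.card ↥(K' ∩ Λ) : ℝ) ≤
        (volume K').toReal / |((EuclideanSpace.basisFun (Fin n) ℝ).toBasis).det ⇑b| *
          (1 + n * succMinimum n n K' Λ / 2) ^ n)
    (FL_lower : ∀ K' : Set (EuclideanSpace ℝ (Fin n)), IsCompact K' → Convex ℝ K' →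
      K' = -K' → 0 < volume K' → succMinimum n n K' Λ ≤ 2 / n →
      (volume K').toReal / |((EuclideanSpace.basisFun (Fin n) ℝ).toBasis).det ⇑b| *
          (1 - n * succMinimum n n K' Λ / 2) ^ n ≤
        (Nat.card ↥(interior K' ∩ Λ) : ℝ))
    (r μ : ℝ) (hr : 0 < r) (hμ : 0 < μ) (hrμ : n * lambdaZ n Λ ≤ r * μ)
    (K : Set (EuclideanSpace ℝ (Fin n))) (hK : IsCompact K) (hKc : Convex ℝ K)
    (hKs : K = -K) (hball : Metric.closedBall (0 : EuclideanSpace ℝ (Fin n)) r ⊆ K) :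
    (Nat.card ↥(K ∩ Λ) : ℝ) / (Nat.card ↥((μ • K) ∩ Λ) : ℝ) ≤
      μ ^ (-(n : ℤ)) * (1 + n * (1 + μ⁻¹) * r⁻¹ * lambdaZ n Λ) ^ n := by
  have hL0 : 0 ≤ lambdaZ n Λ := lambdaZ_nonneg Λ
  have hn' : (0 : ℝ) < n := by exact_mod_cast hn
  have hr0 : r ≠ 0 := hr.ne'
  have hμ0 : μ ≠ 0 := hμ.ne'
  set L := lambdaZ n Λ with hLdef
  set A : ℝ := n * L * r⁻¹ with hAdef
  set B : ℝ := n * L * r⁻¹ * μ⁻¹ with hBdef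
  have hA0 : 0 ≤ A :=
    mul_nonneg (mul_nonneg hn'.le hL0) (inv_nonneg.mpr hr.le)
  have hB0 : 0 ≤ B := mul_nonneg hA0 (inv_nonneg.mpr hμ.le)
  have hB1 : B ≤ 1 := by
    have hBeq : B = (n * L) / (r * μ) := by rw [hBdef]; field_simp
    rw [hBeq, div_le_one (mul_pos hr hμ)]
    exact hrμ
  have hbase : (1 : ℝ) + n * (1 + μ⁻¹) * r⁻¹ * L = 1 + A + B := by
    rw [hAdef, hBdef]; ring
  have hRHS0 : 0 ≤ μ ^ (-(n : ℤ)) * (1 + n * (1 + μ⁻¹) * r⁻¹ * L) ^ n := by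
    apply mul_nonneg (zpow_nonneg hμ.le _)
    apply pow_nonneg; rw [hbase]; linarith
  by_cases hfin : ((μ • K) ∩ Λ).Finite
  · -- main case
    have hd : (0 : ℝ) < |((EuclideanSpace.basisFun (Fin n) ℝ).toBasis).det ⇑b| := by
      rw [abs_pos]
      exact ((Module.Basis.is_basis_iff_det _).mp ⟨b.linearIndependent, b.span_eq⟩).ne_zero
    set d := |((EuclideanSpace.basisFun (Fin n) ℝ).toBasis).det ⇑b| with hddef
    have hd0 : d ≠ 0 := hd.ne'
    have hvolK : 0 < volume K :=
      lt_of_lt_of_le (Metric.measure_ball_pos volume 0 hr)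
        (measure_mono (Metric.ball_subset_closedBall.trans hball))
    set V := (volume K).toReal with hVdef
    have hV : 0 < V := ENNReal.toReal_pos hvolK.ne' hK.measure_lt_top.ne
    have hballμ : Metric.closedBall (0 : EuclideanSpace ℝ (Fin n)) (r * μ) ⊆ μ • K := by
      have h1 : Metric.closedBall (0 : EuclideanSpace ℝ (Fin n)) (r * μ) =
          μ • Metric.closedBall (0 : EuclideanSpace ℝ (Fin n)) r := by
        rw [smul_closedBall _ _ hr.le, smul_zero, Real.norm_eq_abs, abs_of_pos hμ, mul_comm]
      rw [h1]
      exact Set.smul_set_mono hball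
    have hsK : succMinimum n n K Λ ≤ L / r :=
      succMinimum_le_lambdaZ_div b Λ hΛ K r hr hball
    have hsμ : succMinimum n n (μ • K) Λ ≤ L / (r * μ) :=
      succMinimum_le_lambdaZ_div b Λ hΛ (μ • K) (r * μ) (mul_pos hr hμ) hballμ
    have hsK0 : 0 ≤ succMinimum n n K Λ := succMinimum_nonneg K Λ
    have hsμ0 : 0 ≤ succMinimum n n (μ • K) Λ := succMinimum_nonneg (μ • K) Λ
    -- upper bound for the numerator
    have upper1 := FL_upper K hK hKc hKs hvolK
    have upper2 : (1 + (n : ℝ) * succMinimum n n K Λ / 2) ^ n ≤ (1 + A / 2) ^ n := by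
      apply pow_le_pow_left₀ (by linarith [mul_nonneg hn'.le hsK0])
      have h1 : (n : ℝ) * succMinimum n n K Λ ≤ n * (L / r) :=
        mul_le_mul_of_nonneg_left hsK hn'.le
      have h2 : (n : ℝ) * (L / r) = A := by rw [hAdef]; ring
      linarith
    have hUpper : (Nat.card ↥(K ∩ Λ) : ℝ) ≤ V / d * (1 + A / 2) ^ n :=
      upper1.trans (mul_le_mul_of_nonneg_left upper2 (div_nonneg hV.le hd.le))
    -- lower bound for the denominator
    have hKμc : IsCompact (μ • K) := hK.smul μ
    have hKμconv : Convex ℝ (μ • K) := hKc.smul μ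
    have hKμsym : μ • K = -(μ • K) := by
      conv_lhs => rw [hKs]
      rw [Set.smul_set_neg]
    have hvolμeq : volume (μ • K) = ENNReal.ofReal (μ ^ n) * volume K := by
      rw [Measure.addHaar_smul_of_nonneg volume hμ.le K, finrank_euclideanSpace_fin]
    have hvolμ : 0 < volume (μ • K) := by
      rw [hvolμeq]
      exact ENNReal.mul_pos (ENNReal.ofReal_pos.mpr (pow_pos hμ n)).ne' hvolK.ne'
    have hvolμR : (volume (μ • K)).toReal = μ ^ n * V := by
      rw [hvolμeq, ENNReal.toReal_mul, ENNReal.toReal_ofReal (pow_pos hμ n).le, hVdef]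
    have hsμ2 : succMinimum n n (μ • K) Λ ≤ 2 / n := by
      refine hsμ.trans ?_
      rw [div_le_div_iff₀ (mul_pos hr hμ) hn']
      nlinarith [mul_pos hr hμ]
    have lower1 := FL_lower (μ • K) hKμc hKμconv hKμsym hvolμ hsμ2
    rw [hvolμR] at lower1
    have hnsμB : (n : ℝ) * succMinimum n n (μ • K) Λ ≤ B := by
      have h1 : (n : ℝ) * succMinimum n n (μ • K) Λ ≤ n * (L / (r * μ)) :=
        mul_le_mul_of_nonneg_left hsμ hn'.le
      have h2 : (n : ℝ) * (L / (r * μ)) = B := by rw [hBdef]; field_simp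
      linarith
    have lower2 : (1 - B / 2) ^ n ≤ (1 - (n : ℝ) * succMinimum n n (μ • K) Λ / 2) ^ n := by
      apply pow_le_pow_left₀ (by linarith)
      linarith
    have lower3 : (Nat.card ↥(interior (μ • K) ∩ Λ) : ℝ) ≤
        (Nat.card ↥((μ • K) ∩ Λ) : ℝ) :=
      Nat.cast_le.mpr (Nat.card_mono hfin (Set.inter_subset_inter_left Λ interior_subset))
    have hLower : μ ^ n * V / d * (1 - B / 2) ^ n ≤ (Nat.card ↥((μ • K) ∩ Λ) : ℝ) := by
      refine le_trans ?_ (lower1.trans lower3)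
      exact mul_le_mul_of_nonneg_left lower2
        (div_nonneg (mul_nonneg (pow_pos hμ n).le hV.le) hd.le)
    have h12 : (0 : ℝ) < 1 - B / 2 := by linarith
    have hD : 0 < μ ^ n * V / d * (1 - B / 2) ^ n :=
      mul_pos (div_pos (mul_pos (pow_pos hμ n) hV) hd) (pow_pos h12 n)
    have hdiv : (Nat.card ↥(K ∩ Λ) : ℝ) / (Nat.card ↥((μ • K) ∩ Λ) : ℝ) ≤
        (V / d * (1 + A / 2) ^ n) / (μ ^ n * V / d * (1 - B / 2) ^ n) :=
      div_le_div₀ (mul_nonneg (div_nonneg hV.le hd.le)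
        (pow_nonneg (by linarith) n)) hUpper hD hLower
    refine hdiv.trans ?_
    rw [hbase, show μ ^ (-(n : ℤ)) = ((μ : ℝ) ^ n)⁻¹ by rw [zpow_neg, zpow_natCast],
      div_le_iff₀ hD]
    have key : (1 + A / 2) ≤ (1 + A + B) * (1 - B / 2) := by
      nlinarith [mul_nonneg (add_nonneg hA0 hB0) (sub_nonneg.mpr hB1)]
    have keyn : (1 + A / 2) ^ n ≤ (1 + A + B) ^ n * (1 - B / 2) ^ n := by
      rw [← mul_pow]
      exact pow_le_pow_left₀ (by linarith) key n
    calc V / d * (1 + A / 2) ^ n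
        ≤ V / d * ((1 + A + B) ^ n * (1 - B / 2) ^ n) :=
          mul_le_mul_of_nonneg_left keyn (div_nonneg hV.le hd.le)
      _ = (μ ^ n)⁻¹ * (1 + A + B) ^ n * (μ ^ n * V / d * (1 - B / 2) ^ n) := by
          field_simp
  · -- denominator infinite: LHS is 0
    have h0 : (Nat.card ↥((μ • K) ∩ Λ) : ℝ) = 0 := by
      have : Infinite ↥((μ • K) ∩ Λ) := Set.infinite_coe_iff.mpr hfin
      rw [Nat.card_eq_zero_of_infinite, Nat.cast_zero]
    rw [h0, div_zero]
    exact hRHS0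
end

section
/- Let K ⊆ ℝ^d be a compact, convex, symmetric set of positive volume, write points as x = (x₁, …, x_d), set H_t = {x ∈ K : x₁ = t}, and suppose K contains a point x with |x₁| = r' > 0. Then for every t ∈ ℝ, Vol_{d−1}(K ∩ H_t) / Vol(K) ≤ d / (2r'), where Vol_{d−1} is (d−1)-dimensional Lebesgue measure on the hyperplane {x₁ = t}. -/
open MeasureTheory Set ENNReal

/-- If `K` is convex, contains a point `a` with `a.1 = s`, then for `u` in the
interval between `t` and `s`, the slice at `u` contains a scaled copy of the slice at `t`. -/
private lemma cone_slice_bound {m : ℕ} {K : Set (ℝ × (Fin m → ℝ))} (hKc : Convex ℝ K)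
    {t s : ℝ} {a : ℝ × (Fin m → ℝ)} (ha : a ∈ K) (has : a.1 = s)
    {u : ℝ} (hu : u ∈ Set.uIoc t s) :
    ENNReal.ofReal (((s - u) / (s - t)) ^ m) * volume {y : Fin m → ℝ | (t, y) ∈ K}
      ≤ volume {y : Fin m → ℝ | (u, y) ∈ K} := by
  have key : ∀ c : ℝ, 0 ≤ c → c ≤ 1 → c * t + (1 - c) * s = u →
      ENNReal.ofReal (c ^ m) * volume {y : Fin m → ℝ | (t, y) ∈ K}
        ≤ volume {y : Fin m → ℝ | (u, y) ∈ K} := by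
    intro c hc0 hc1 hcu
    have hsub : (AffineMap.homothety a.2 c) '' {y : Fin m → ℝ | (t, y) ∈ K}
        ⊆ {y : Fin m → ℝ | (u, y) ∈ K} := by
      rintro _ ⟨y, hy, rfl⟩
      have hmem : c • ((t : ℝ), y) + (1 - c) • a ∈ K :=
        hKc hy ha hc0 (by linarith) (by ring)
      have heq : c • ((t : ℝ), y) + (1 - c) • a = (u, AffineMap.homothety a.2 c y) := by
        refine Prod.ext ?_ ?_
        · simp only [Prod.fst_add, Prod.smul_fst, smul_eq_mul, has]
          linarith [hcu]
        · simp only [Prod.snd_add, Prod.smul_snd, AffineMap.homothety_apply]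
          ext i
          simp only [Pi.add_apply, Pi.smul_apply, smul_eq_mul, vsub_eq_sub, vadd_eq_add,
            Pi.sub_apply]
          ring
      rw [heq] at hmem
      exact hmem
    calc ENNReal.ofReal (c ^ m) * volume {y : Fin m → ℝ | (t, y) ∈ K}
        = volume ((AffineMap.homothety a.2 c) '' {y : Fin m → ℝ | (t, y) ∈ K}) := by
          rw [Measure.addHaar_image_homothety]
          congr 2
          rw [abs_of_nonneg (pow_nonneg hc0 _), Module.finrank_fintype_fun_eq_card,
            Fintype.card_fin]
      _ ≤ volume {y : Fin m → ℝ | (u, y) ∈ K} := measure_mono hsub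
  rcases Set.mem_uIoc.1 hu with ⟨h1, h2⟩ | ⟨h1, h2⟩
  · -- t < u ≤ s
    have hst : s - t > 0 := by linarith
    refine key _ (div_nonneg (by linarith) hst.le) ((div_le_one hst).2 (by linarith)) ?_
    field_simp
    ring
  · -- s < u ≤ t
    have hst : s - t < 0 := by linarith
    have hst0 : s - t ≠ 0 := hst.ne
    refine key _ (div_nonneg_of_nonpos (by linarith) hst.le)
      ((div_le_one_of_ge (by linarith) hst.le)) ?_
    field_simp
    ring

theorem slice_volume_bound (m : ℕ) (K : Set (ℝ × (Fin m → ℝ)))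
    (hK : IsCompact K) (hKc : Convex ℝ K) (hKs : K = -K)
    (hKv : 0 < volume K) (r' : ℝ) (hr' : 0 < r')
    (hx : ∃ x ∈ K, |x.1| = r') (t : ℝ) :
    (volume {y : Fin m → ℝ | (t, y) ∈ K}).toReal / (volume K).toReal ≤
      ((m : ℝ) + 1) / (2 * r') := by
  obtain ⟨x, hxK, hxr⟩ := hx
  have hKm : MeasurableSet K := hK.measurableSet
  set f : ℝ → ℝ≥0∞ := fun u => volume {y : Fin m → ℝ | (u, y) ∈ K} with hf
  have hfm : Measurable f := measurable_measure_prodMk_left hKm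
  have hm1 : (0 : ℝ) < (m : ℝ) + 1 := by positivity
  -- Fubini
  have hFub : volume K = ∫⁻ u, f u := by
    rw [Measure.volume_eq_prod, Measure.prod_apply hKm]
    rfl
  -- the integral of the cone factor
  have hint : ∀ s : ℝ, s ≠ t →
      (∫⁻ u in Set.uIoc t s, ENNReal.ofReal (((s - u) / (s - t)) ^ m))
        = ENNReal.ofReal (|s - t| / ((m : ℝ) + 1)) := by
    intro s hs
    have hst : s - t ≠ 0 := sub_ne_zero.2 hs
    have hIval : (∫ u in t..s, ((s - u) / (s - t)) ^ m) = (s - t) / ((m : ℝ) + 1) := by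
      have h1 : ∀ u : ℝ, ((s - u) / (s - t)) ^ m = ((s - t)⁻¹) ^ m * (s - u) ^ m := by
        intro u; rw [div_eq_mul_inv, mul_pow, mul_comm]
      simp_rw [h1]
      rw [intervalIntegral.integral_const_mul,
        intervalIntegral.integral_comp_sub_left (fun v => v ^ m) s, sub_self,
        integral_pow]
      field_simp
      have h2 : (s - t)⁻¹ ^ m * (s - t) ^ m = 1 := by rw [← mul_pow, inv_mul_cancel₀ hst, one_pow]
      linear_combination (s - t) * h2
    have hcont : Continuous fun u : ℝ => ((s - u) / (s - t)) ^ m := by fun_prop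
    rcases le_or_gt t s with h | h
    · rw [Set.uIoc_of_le h]
      have hnn : ∀ u ∈ Set.Ioc t s, 0 ≤ ((s - u) / (s - t)) ^ m := by
        intro u hu
        exact pow_nonneg (div_nonneg (by linarith [hu.2]) (by linarith)) _
      rw [← ofReal_integral_eq_lintegral_ofReal (hcont.integrableOn_Ioc)
        ((ae_restrict_iff' measurableSet_Ioc).2 (Filter.Eventually.of_forall hnn))]
      rw [← intervalIntegral.integral_of_le h, hIval, abs_of_nonneg (by linarith)]
    · rw [Set.uIoc_of_ge h.le]
      have hnn : ∀ u ∈ Set.Ioc s t, 0 ≤ ((s - u) / (s - t)) ^ m := by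
        intro u hu
        exact pow_nonneg (div_nonneg_of_nonpos (by linarith [hu.1]) (by linarith)) _
      rw [← ofReal_integral_eq_lintegral_ofReal (hcont.integrableOn_Ioc)
        ((ae_restrict_iff' measurableSet_Ioc).2 (Filter.Eventually.of_forall hnn))]
      rw [← intervalIntegral.integral_of_le h.le, intervalIntegral.integral_symm t s, hIval,
        abs_of_nonpos (by linarith)]
      congr 1
      ring
  -- one-sided cone bound
  have hside : ∀ s : ℝ, s ≠ t → (∃ a ∈ K, a.1 = s) →
      ENNReal.ofReal (|s - t| / ((m : ℝ) + 1)) * f t ≤ ∫⁻ u in Set.uIoc t s, f u := by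
    rintro s hs ⟨a, haK, has⟩
    calc ENNReal.ofReal (|s - t| / ((m : ℝ) + 1)) * f t
        = ∫⁻ u in Set.uIoc t s, ENNReal.ofReal (((s - u) / (s - t)) ^ m) * f t := by
          rw [lintegral_mul_const _ (by fun_prop), hint s hs]
      _ ≤ ∫⁻ u in Set.uIoc t s, f u := by
          refine setLIntegral_mono hfm fun u hu => ?_
          exact cone_slice_bound hKc haK has hu
  -- points at heights r' and -r'
  have hxK' : -x ∈ K := by rw [hKs]; exact Set.neg_mem_neg.2 hxK
  have hpn : (∃ a ∈ K, a.1 = r') ∧ (∃ a ∈ K, a.1 = -r') := by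
    rcases (abs_eq hr'.le).1 hxr with h | h
    · exact ⟨⟨x, hxK, h⟩, ⟨-x, hxK', by simp [h]⟩⟩
    · exact ⟨⟨-x, hxK', by simp [h]⟩, ⟨x, hxK, h⟩⟩
  obtain ⟨hp, hn⟩ := hpn
  have hVtop : volume K ≠ ⊤ := hK.measure_lt_top.ne
  -- main bound
  have hmain : ENNReal.ofReal (2 * r' / ((m : ℝ) + 1)) * f t ≤ volume K := by
    rcases le_or_gt r' t with h1 | h1
    · -- use s = -r'
      have hs : (-r') ≠ t := by intro h; rw [← h] at h1; linarith
      calc ENNReal.ofReal (2 * r' / ((m : ℝ) + 1)) * f t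
          ≤ ENNReal.ofReal (|(-r') - t| / ((m : ℝ) + 1)) * f t := by
            refine mul_le_mul_left (ENNReal.ofReal_le_ofReal ?_) _
            apply div_le_div_of_nonneg_right ?_ hm1.le
            rw [abs_of_nonpos (by linarith)]
            linarith
        _ ≤ ∫⁻ u in Set.uIoc t (-r'), f u := hside _ hs hn
        _ ≤ ∫⁻ u, f u := setLIntegral_le_lintegral _ _
        _ = volume K := hFub.symm
    · rcases le_or_gt t (-r') with h2 | h2
      · -- use s = r'
        have hs : r' ≠ t := by intro h; rw [← h] at h2; linarith
        calc ENNReal.ofReal (2 * r' / ((m : ℝ) + 1)) * f t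
            ≤ ENNReal.ofReal (|r' - t| / ((m : ℝ) + 1)) * f t := by
              refine mul_le_mul_left (ENNReal.ofReal_le_ofReal ?_) _
              apply div_le_div_of_nonneg_right ?_ hm1.le
              rw [abs_of_nonneg (by linarith)]
              linarith
          _ ≤ ∫⁻ u in Set.uIoc t r', f u := hside _ hs hp
          _ ≤ ∫⁻ u, f u := setLIntegral_le_lintegral _ _
          _ = volume K := hFub.symm
      · -- -r' < t < r' : use both sides
        have h1' := hside r' (by linarith) hp
        have h2' := hside (-r') (by linarith) hn
        rw [Set.uIoc_of_le h1.le, abs_of_nonneg (by linarith)] at h1'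
        rw [Set.uIoc_comm, Set.uIoc_of_le h2.le, abs_of_nonpos (by linarith)] at h2'
        have hd : Disjoint (Set.Ioc (-r') t) (Set.Ioc t r') := by
          apply Set.disjoint_left.2
          rintro u ⟨_, hu2⟩ ⟨hu3, _⟩
          exact absurd hu2 (not_le.2 hu3)
        have hunion : (∫⁻ u in Set.Ioc (-r') t, f u) + ∫⁻ u in Set.Ioc t r', f u
            ≤ ∫⁻ u, f u := by
          rw [← lintegral_union measurableSet_Ioc hd]
          exact setLIntegral_le_lintegral _ _
        calc ENNReal.ofReal (2 * r' / ((m : ℝ) + 1)) * f t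
            = ENNReal.ofReal (-((-r') - t) / ((m : ℝ) + 1)) * f t
                + ENNReal.ofReal ((r' - t) / ((m : ℝ) + 1)) * f t := by
              rw [← add_mul, ← ENNReal.ofReal_add (div_nonneg (by linarith) hm1.le)
                (div_nonneg (by linarith) hm1.le)]
              congr 2
              field_simp
              ring
          _ ≤ (∫⁻ u in Set.Ioc (-r') t, f u) + ∫⁻ u in Set.Ioc t r', f u :=
              add_le_add h2' h1'
          _ ≤ ∫⁻ u, f u := hunion
          _ = volume K := hFub.symm
  -- conclude
  have hc0 : (0 : ℝ) < 2 * r' / ((m : ℝ) + 1) := by positivity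
  have hftop : f t ≠ ⊤ := by
    intro h
    rw [h, ENNReal.mul_top ((ENNReal.ofReal_pos.2 hc0).ne')] at hmain
    exact hVtop (top_le_iff.1 hmain)
  have hle := ENNReal.toReal_mono hVtop hmain
  rw [ENNReal.toReal_mul, ENNReal.toReal_ofReal hc0.le] at hle
  have hV0 : 0 < (volume K).toReal := ENNReal.toReal_pos hKv.ne' hVtop
  rw [div_le_div_iff₀ hV0 (by positivity)]
  rw [div_mul_eq_mul_div, div_le_iff₀ hm1] at hle
  nlinarith [hle]
end

section
/- Let R be a subring of a number field K that is finitely generated and free as a ℤ-module and spans K over ℚ (an order in K). Then the unit group R× is finite if and only if r + s = 1, where r is the number of real embeddings of K and s the number of conjugate pairs of complex embeddings; equivalently, R× is finite if and only if K = ℚ or K is imaginary quadratic. -/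
open NumberField

set_option maxSynthPendingDepth 2
set_option synthInstance.maxHeartbeats 1000000
set_option maxHeartbeats 1000000

theorem ringOfIntegers_units_finite_iff_rank_eq_zero (K : Type*) [Field K] [NumberField K] :
    Finite (𝓞 K)ˣ ↔ Units.rank K = 0 := by
  constructor
  · intro h
    by_contra hr
    have hq : Finite (Additive ((𝓞 K)ˣ ⧸ Units.torsion K)) :=
      (Quotient.finite _ : Finite ((𝓞 K)ˣ ⧸ Units.torsion K))
    have hinj : Function.Injective
        fun n : ℤ => n • Units.basisModTorsion K ⟨0, Nat.pos_of_ne_zero hr⟩ :=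
      smul_left_injective ℤ ((Units.basisModTorsion K).ne_zero _)
    exact (Finite.of_injective _ hinj).not_infinite inferInstance
  · intro h
    have hsub : Subsingleton (Additive ((𝓞 K)ˣ ⧸ Units.torsion K)) := by
      have b := Units.basisModTorsion K
      rw [h] at b
      exact b.repr.toEquiv.subsingleton_congr.mpr inferInstance
    have : Subsingleton ((𝓞 K)ˣ ⧸ Units.torsion K) := hsub
    have : Finite ((𝓞 K)ˣ ⧸ Units.torsion K) := inferInstance
    exact Finite.of_equiv _ (Subgroup.groupEquivQuotientProdSubgroup (s := Units.torsion K)).symm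

theorem aux_denom (K : Type*) [Field K] [CharZero K] (S : Set K) {x : K}
    (hx : x ∈ Submodule.span ℚ S) :
    ∃ m : ℤ, m ≠ 0 ∧ (m : K) * x ∈ Submodule.span ℤ S := by
  induction hx using Submodule.span_induction with
  | mem y hy => exact ⟨1, one_ne_zero, by simpa using Submodule.subset_span hy⟩
  | zero => exact ⟨1, one_ne_zero, by simp⟩
  | add y z _ _ hy hz =>
    obtain ⟨m, hm, hmy⟩ := hy
    obtain ⟨n, hn, hnz⟩ := hz
    refine ⟨m * n, mul_ne_zero hm hn, ?_⟩
    have : ((m * n : ℤ) : K) * (y + z) = n • ((m : K) * y) + m • ((n : K) * z) := by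
      simp only [zsmul_eq_mul]; push_cast; ring
    rw [this]
    exact Submodule.add_mem _ (Submodule.smul_mem _ _ hmy) (Submodule.smul_mem _ _ hnz)
  | smul q y _ hy =>
    obtain ⟨m, hm, hmy⟩ := hy
    refine ⟨m * q.den, mul_ne_zero hm (by exact_mod_cast q.den_nz), ?_⟩
    have hkey : (q : K) * (q.den : K) = (q.num : K) := by
      rw [show ((q.den : K)) = (((q.den : ℚ)) : K) by push_cast; rfl,
        ← Rat.cast_mul, Rat.mul_den_eq_num, Rat.cast_intCast]
    have : ((m * q.den : ℤ) : K) * (q • y) = q.num • ((m : K) * y) := by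
      rw [Rat.smul_def, zsmul_eq_mul]
      push_cast
      linear_combination (m : K) * y * hkey
    rw [this]
    exact Submodule.smul_mem _ _ hmy

theorem aux_m (K : Type*) [Field K] [NumberField K] (R : Subring K)
    (hspan : Submodule.span ℚ (R : Set K) = ⊤) :
    ∃ m : ℤ, m ≠ 0 ∧ ∀ x : 𝓞 K, (m : K) * (x : K) ∈ R := by
  classical
  set N : Submodule ℤ K := AddSubgroup.toIntSubmodule R.toAddSubgroup with hN
  have hNR : ∀ y : K, y ∈ N ↔ y ∈ R := fun y => Iff.rfl
  have hle : Submodule.span ℤ (R : Set K) ≤ N :=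
    Submodule.span_le.mpr (fun y hy => hy)
  let b := Module.Free.chooseBasis ℤ (𝓞 K)
  have hmem : ∀ i, ∃ m : ℤ, m ≠ 0 ∧ (m : K) * (b i : K) ∈ N := by
    intro i
    obtain ⟨m, hm, h⟩ := aux_denom K (R : Set K)
      (by rw [hspan]; trivial : ((b i : K)) ∈ Submodule.span ℚ (R : Set K))
    exact ⟨m, hm, hle h⟩
  choose f hf hfm using hmem
  refine ⟨∏ i, f i, Finset.prod_ne_zero_iff.mpr (fun i _ => hf i), ?_⟩
  intro x
  set m : ℤ := ∏ i, f i with hm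
  have hgen : ∀ i, m • ((b i : K)) ∈ N := by
    intro i
    have h1 : m = f i * ∏ j ∈ Finset.univ.erase i, f j := by
      rw [hm, ← Finset.mul_prod_erase _ _ (Finset.mem_univ i)]
    rw [h1, mul_comm, mul_smul]
    refine Submodule.smul_mem _ _ ?_
    rw [zsmul_eq_mul]
    exact hfm i
  -- x : K lies in span of the basis images
  have hx : (x : K) ∈ Submodule.span ℤ (Set.range fun i => (b i : K)) := by
    have h1 : x ∈ Submodule.span ℤ (Set.range b) := by rw [b.span_eq]; trivial
    have h2 := Submodule.mem_map_of_mem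
      (f := ((algebraMap (𝓞 K) K).toIntAlgHom.toLinearMap : 𝓞 K →ₗ[ℤ] K)) h1
    rw [Submodule.map_span, ← Set.range_comp] at h2
    exact h2
  have hcomap : Submodule.span ℤ (Set.range fun i => (b i : K)) ≤
      N.comap (m • (LinearMap.id : K →ₗ[ℤ] K)) := by
    rw [Submodule.span_le]
    rintro _ ⟨i, rfl⟩
    simp only [Submodule.mem_comap, LinearMap.smul_apply, LinearMap.id_apply]
    exact hgen i
  have h3 := hcomap hx
  simp only [Submodule.mem_comap, LinearMap.smul_apply, LinearMap.id_apply] at h3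
  rw [show (m : K) * (x : K) = m • (x : K) from (zsmul_eq_mul _ _).symm]
  exact (hNR _).mp h3

open NumberField.Units in
theorem aux_infinite (K : Type*) [Field K] [NumberField K] (R : Subring K)
    (hspan : Submodule.span ℚ (R : Set K) = ⊤) (hr : rank K ≠ 0) :
    Infinite Rˣ := by
  classical
  obtain ⟨m, hm, hmmem⟩ := aux_m K R hspan
  set u : (𝓞 K)ˣ := fundSystem K ⟨0, Nat.pos_of_ne_zero hr⟩ with hu_def
  have hu : ¬ IsOfFinOrder u := by
    intro h
    obtain ⟨n, hn, hun⟩ := isOfFinOrder_iff_pow_eq_one.mp h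
    have h0 : Additive.ofMul (QuotientGroup.mk (u ^ n) : (𝓞 K)ˣ ⧸ torsion K) = 0 := by
      rw [hun]; simp
    rw [QuotientGroup.mk_pow, ofMul_pow, hu_def, fundSystem_mk] at h0
    have h2 := congrArg (fun z => (basisModTorsion K).repr z ⟨0, Nat.pos_of_ne_zero hr⟩) h0
    simp [Module.Basis.repr_self] at h2
    exact hn.ne' h2
  have hmO : (m : 𝓞 K) ≠ 0 := by exact_mod_cast hm
  set I : Ideal (𝓞 K) := Ideal.span {(m : 𝓞 K)} with hI_def
  have hI : I ≠ ⊥ := by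
    rw [hI_def, Ne, Ideal.span_singleton_eq_bot]
    exact hmO
  haveI := Ideal.finiteQuotientOfFreeOfNeBot I hI
  set φ : (𝓞 K)ˣ →* ((𝓞 K) ⧸ I)ˣ := Units.map (Ideal.Quotient.mk I : 𝓞 K →+* (𝓞 K) ⧸ I) with hφ
  have hfinq : Finite ((𝓞 K ⧸ I)ˣ) := inferInstance
  set k : ℕ := Nat.card ((𝓞 K ⧸ I)ˣ) with hk_def
  have hk : 0 < k := Nat.card_pos
  have key : ∀ w : (𝓞 K)ˣ, ((((w ^ k : (𝓞 K)ˣ) : 𝓞 K)) : K) ∈ R := by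
    intro w
    have h1 : (φ w) ^ k = 1 := pow_card_eq_one'

    have h2 : Ideal.Quotient.mk I ((w : 𝓞 K) ^ k) = 1 := by
      have := congrArg (fun z => ((z : ((𝓞 K) ⧸ I)ˣ) : (𝓞 K) ⧸ I)) h1
      simpa [hφ] using this
    have h3 : (w : 𝓞 K) ^ k - 1 ∈ I := by
      rw [← Ideal.Quotient.eq_zero_iff_mem, map_sub, h2, map_one, sub_self]
    obtain ⟨y, hy⟩ := Ideal.mem_span_singleton'.mp (hI_def ▸ h3)
    have h4 : ((algebraMap (𝓞 K) K) (w : 𝓞 K)) ^ k = 1 + (m : K) * (algebraMap (𝓞 K) K y) := by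
      have h5 := congrArg (algebraMap (𝓞 K) K) hy
      rw [map_mul, map_sub, map_pow, map_one, map_intCast] at h5
      linear_combination -h5
    have hwk : ((w ^ k : (𝓞 K)ˣ) : 𝓞 K) = (w : 𝓞 K) ^ k := Units.val_pow_eq_pow_val _ _
    rw [NumberField.RingOfIntegers.coe_eq_algebraMap, hwk, map_pow, h4]
    exact R.add_mem R.one_mem (hmmem y)
  -- the unit of R
  have ha : (((u ^ k : (𝓞 K)ˣ) : 𝓞 K) : K) ∈ R := key u
  have hb : ((((u ^ k)⁻¹ : (𝓞 K)ˣ) : 𝓞 K) : K) ∈ R := by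
    have := key u⁻¹
    rwa [inv_pow] at this
  have hab : ((((u ^ k : (𝓞 K)ˣ) : 𝓞 K)) : K) * ((((u ^ k)⁻¹ : (𝓞 K)ˣ) : 𝓞 K) : K) = 1 := by
    rw [NumberField.RingOfIntegers.coe_eq_algebraMap, NumberField.RingOfIntegers.coe_eq_algebraMap,
      ← map_mul, ← Units.val_mul, mul_inv_cancel, Units.val_one, map_one]
  set v : Rˣ :=
    { val := ⟨_, ha⟩
      inv := ⟨_, hb⟩
      val_inv := by
        ext
        push_cast
        exact hab
      inv_val := by
        ext
        push_cast
        rw [mul_comm]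
        exact hab } with hv_def
  have hv : ¬ IsOfFinOrder v := by
    intro h
    obtain ⟨n, hn, hvn⟩ := isOfFinOrder_iff_pow_eq_one.mp h
    apply hu
    rw [isOfFinOrder_iff_pow_eq_one]
    refine ⟨k * n, by positivity, ?_⟩
    have h1 : ((v ^ n : Rˣ) : R) = 1 := by rw [hvn]; rfl
    have h2 : ((((u ^ k : (𝓞 K)ˣ) : 𝓞 K) : K)) ^ n = 1 := by
      have := congrArg (fun z : R => (z : K)) h1
      simpa [hv_def] using this
    have h3 : (((u ^ (k * n) : (𝓞 K)ˣ) : 𝓞 K) : K) = 1 := by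
      rw [pow_mul]
      push_cast
      rw [← h2]
      push_cast
      ring
    have h4 : ((u ^ (k * n) : (𝓞 K)ˣ) : 𝓞 K) = 1 := by
      exact_mod_cast h3
    exact Units.ext h4
  rw [← not_finite_iff_infinite]
  intro hfin
  exact hv (isOfFinOrder_of_finite v)

theorem order_units_finite_iff (K : Type*) [Field K] [NumberField K] (R : Subring K)
    (hfg : Module.Finite ℤ R) (hfree : Module.Free ℤ R)
    (hspan : Submodule.span ℚ (R : Set K) = ⊤) :
    (Finite Rˣ ↔
      Nat.card {w : NumberField.InfinitePlace K // w.IsReal} +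
        Nat.card {w : NumberField.InfinitePlace K // w.IsComplex} = 1) ∧
    (Finite Rˣ ↔
      Module.finrank ℚ K = 1 ∨
        (Module.finrank ℚ K = 2 ∧
          Nat.card {w : NumberField.InfinitePlace K // w.IsReal} = 0)) := by
    classical
  have hfg' : (Subalgebra.toSubmodule (subalgebraOfSubring R)).FG := by
    rw [← Module.Finite.iff_fg]
    exact hfg
  have hint : ∀ x : R, IsIntegral ℤ (x : K) := fun x =>
    IsIntegral.of_mem_of_fg (subalgebraOfSubring R) hfg' _ x.2
  let g : R →+* 𝓞 K :=
    { toFun := fun x => ⟨(x : K), hint x⟩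
      map_one' := by apply NumberField.RingOfIntegers.coe_injective; rfl
      map_mul' := fun x y => by apply NumberField.RingOfIntegers.coe_injective; rfl
      map_zero' := by apply NumberField.RingOfIntegers.coe_injective; rfl
      map_add' := fun x y => by apply NumberField.RingOfIntegers.coe_injective; rfl }
  have ginj : Function.Injective g := by
    intro a b h
    have : ((a : K)) = (b : K) := congrArg (algebraMap (𝓞 K) K) h
    exact Subtype.ext this
  have hmain : Finite Rˣ ↔ NumberField.Units.rank K = 0 := by
    constructor
    · intro h
      by_contra hr
      haveI := aux_infinite K R hspan hr
      exact not_finite Rˣ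
    · intro h
      haveI : Finite (𝓞 K)ˣ := (ringOfIntegers_units_finite_iff_rank_eq_zero K).mpr h
      exact Finite.of_injective _ (Units.map_injective ginj)
  have hcard : Fintype.card (NumberField.InfinitePlace K) =
      NumberField.InfinitePlace.nrRealPlaces K + NumberField.InfinitePlace.nrComplexPlaces K :=
    NumberField.InfinitePlace.card_eq_nrRealPlaces_add_nrComplexPlaces K
  have hpos : 0 < Fintype.card (NumberField.InfinitePlace K) := Fintype.card_pos
  have hrank : NumberField.Units.rank K = Fintype.card (NumberField.InfinitePlace K) - 1 := rfl
  have hdeg : NumberField.InfinitePlace.nrRealPlaces K +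
      2 * NumberField.InfinitePlace.nrComplexPlaces K = Module.finrank ℚ K :=
    NumberField.InfinitePlace.card_add_two_mul_card_eq_rank K
  have h1 : Nat.card {w : NumberField.InfinitePlace K // w.IsReal} =
      NumberField.InfinitePlace.nrRealPlaces K := Nat.card_eq_fintype_card
  have h2 : Nat.card {w : NumberField.InfinitePlace K // w.IsComplex} =
      NumberField.InfinitePlace.nrComplexPlaces K := Nat.card_eq_fintype_card
  rw [hmain, h1, h2]
  omega
end
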